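/- Let A, B, C be points of a real inner product space with a = BC, b = CA, c = AB, and for i = 1, 2, 3 let Pᵢ be the barycenter of {A,B,C} with weights (tᵢ¹, tᵢ², tᵢ³), where Tᵢ := tᵢ¹ + tᵢ² + tᵢ³ ≠ 0. For i, j ∈ {1,2,3} set αᵢⱼ = tⱼ¹/Tⱼ − tᵢ¹/Tᵢ, βᵢⱼ = tⱼ²/Tⱼ − tᵢ²/Tᵢ, γᵢⱼ = tⱼ³/Tⱼ − tᵢ³/Tᵢ. If P₁, P₂, P₃ are pairwise distinct, then |a²(β₁₂γ₁₂ + β₂₃γ₂₃ − β₃₁γ₃₁) + b²(γ₁₂α₁₂ + γ₂₃α₂₃ − γ₃₁α₃₁) + c²(α₁₂β₁₂ + α₂₃β₂₃ − α₃₁β₃₁)| ≤ 2·√(−β₁₂γ₁₂a² − γ₁₂α₁₂b² − α₁₂β₁₂c²)·√(−β₂₃γ₂₃a² − γ₂₃α₂₃b² − α₂₃β₂₃c²). -/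

import Mathlib

open scoped RealInnerProductSpace


private lemma key19 {E : Type*} [NormedAddCommGroup E] [InnerProductSpace ℝ E]
    (A B C : E) (α β γ : ℝ) (h : α + β + γ = 0) :
    ‖α • A + β • B + γ • C‖ ^ 2 =
      -(β * γ * ‖B - C‖ ^ 2) - γ * α * ‖C - A‖ ^ 2 - α * β * ‖A - B‖ ^ 2 := by
  have hγ : γ = -α - β := by linarith
  subst hγ
  have e : α • A + β • B + (-α - β) • C = α • (A - C) + β • (B - C) := by module
  have h2 : A - B = (A - C) - (B - C) := by abel
  have hAB : ‖A - B‖ ^ 2 = ‖A - C‖ ^ 2 - 2 * ⟪A - C, B - C⟫ + ‖B - C‖ ^ 2 := by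
    rw [h2, norm_sub_sq_real]
  rw [e, norm_add_sq_real, norm_smul, norm_smul, real_inner_smul_left,
    real_inner_smul_right, norm_sub_rev C A, hAB]
  simp only [mul_pow, sq_abs, Real.norm_eq_abs]
  ring



/-- Blundon type inequalities for three barycenters `P₁, P₂, P₃` of
`{A, B, C}` with weights `(tᵢ¹, tᵢ², tᵢ³)`, `i = 1, 2, 3`. -/
theorem stmt_19 {E : Type*} [NormedAddCommGroup E] [InnerProductSpace ℝ E]
    (A B C P₁ P₂ P₃ : E)
    (t₁₁ t₁₂ t₁₃ t₂₁ t₂₂ t₂₃ t₃₁ t₃₂ t₃₃ : ℝ)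
    (α₁₂ β₁₂ γ₁₂ α₂₃ β₂₃ γ₂₃ α₃₁ β₃₁ γ₃₁ : ℝ)
    (hT₁ : t₁₁ + t₁₂ + t₁₃ ≠ 0) (hT₂ : t₂₁ + t₂₂ + t₂₃ ≠ 0) (hT₃ : t₃₁ + t₃₂ + t₃₃ ≠ 0)
    (hP₁ : ∀ M : E, (t₁₁ + t₁₂ + t₁₃) • (P₁ - M) =
      t₁₁ • (A - M) + t₁₂ • (B - M) + t₁₃ • (C - M))
    (hP₂ : ∀ M : E, (t₂₁ + t₂₂ + t₂₃) • (P₂ - M) =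
      t₂₁ • (A - M) + t₂₂ • (B - M) + t₂₃ • (C - M))
    (hP₃ : ∀ M : E, (t₃₁ + t₃₂ + t₃₃) • (P₃ - M) =
      t₃₁ • (A - M) + t₃₂ • (B - M) + t₃₃ • (C - M))
    (hα₁₂ : α₁₂ = t₂₁ / (t₂₁ + t₂₂ + t₂₃) - t₁₁ / (t₁₁ + t₁₂ + t₁₃))
    (hβ₁₂ : β₁₂ = t₂₂ / (t₂₁ + t₂₂ + t₂₃) - t₁₂ / (t₁₁ + t₁₂ + t₁₃))
    (hγ₁₂ : γ₁₂ = t₂₃ / (t₂₁ + t₂₂ + t₂₃) - t₁₃ / (t₁₁ + t₁₂ + t₁₃))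
    (hα₂₃ : α₂₃ = t₃₁ / (t₃₁ + t₃₂ + t₃₃) - t₂₁ / (t₂₁ + t₂₂ + t₂₃))
    (hβ₂₃ : β₂₃ = t₃₂ / (t₃₁ + t₃₂ + t₃₃) - t₂₂ / (t₂₁ + t₂₂ + t₂₃))
    (hγ₂₃ : γ₂₃ = t₃₃ / (t₃₁ + t₃₂ + t₃₃) - t₂₃ / (t₂₁ + t₂₂ + t₂₃))
    (hα₃₁ : α₃₁ = t₁₁ / (t₁₁ + t₁₂ + t₁₃) - t₃₁ / (t₃₁ + t₃₂ + t₃₃))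
    (hβ₃₁ : β₃₁ = t₁₂ / (t₁₁ + t₁₂ + t₁₃) - t₃₂ / (t₃₁ + t₃₂ + t₃₃))
    (hγ₃₁ : γ₃₁ = t₁₃ / (t₁₁ + t₁₂ + t₁₃) - t₃₃ / (t₃₁ + t₃₂ + t₃₃))
    (h₁₂ : P₁ ≠ P₂) (h₂₃ : P₂ ≠ P₃) (h₁₃ : P₁ ≠ P₃) :
    |dist B C ^ 2 * (β₁₂ * γ₁₂ + β₂₃ * γ₂₃ - β₃₁ * γ₃₁)
        + dist C A ^ 2 * (γ₁₂ * α₁₂ + γ₂₃ * α₂₃ - γ₃₁ * α₃₁)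
        + dist A B ^ 2 * (α₁₂ * β₁₂ + α₂₃ * β₂₃ - α₃₁ * β₃₁)| ≤
      2 * Real.sqrt (-(β₁₂ * γ₁₂ * dist B C ^ 2) - γ₁₂ * α₁₂ * dist C A ^ 2
            - α₁₂ * β₁₂ * dist A B ^ 2) *
          Real.sqrt (-(β₂₃ * γ₂₃ * dist B C ^ 2) - γ₂₃ * α₂₃ * dist C A ^ 2
            - α₂₃ * β₂₃ * dist A B ^ 2) := by
  set T₁ := t₁₁ + t₁₂ + t₁₃ with hT₁def
  set T₂ := t₂₁ + t₂₂ + t₂₃ with hT₂def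
  set T₃ := t₃₁ + t₃₂ + t₃₃ with hT₃def
  have e₁ : P₁ = (t₁₁ / T₁) • A + (t₁₂ / T₁) • B + (t₁₃ / T₁) • C := by
    have h := hP₁ 0
    simp only [sub_zero] at h
    have h' := congrArg (fun x : E => T₁⁻¹ • x) h
    simp only [inv_smul_smul₀ hT₁, smul_add, smul_smul, div_eq_inv_mul] at h' ⊢
    exact h'
  have e₂ : P₂ = (t₂₁ / T₂) • A + (t₂₂ / T₂) • B + (t₂₃ / T₂) • C := by
    have h := hP₂ 0
    simp only [sub_zero] at h
    have h' := congrArg (fun x : E => T₂⁻¹ • x) h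
    simp only [inv_smul_smul₀ hT₂, smul_add, smul_smul, div_eq_inv_mul] at h' ⊢
    exact h'
  have e₃ : P₃ = (t₃₁ / T₃) • A + (t₃₂ / T₃) • B + (t₃₃ / T₃) • C := by
    have h := hP₃ 0
    simp only [sub_zero] at h
    have h' := congrArg (fun x : E => T₃⁻¹ • x) h
    simp only [inv_smul_smul₀ hT₃, smul_add, smul_smul, div_eq_inv_mul] at h' ⊢
    exact h'
  have hu : P₂ - P₁ = α₁₂ • A + β₁₂ • B + γ₁₂ • C := by
    rw [e₁, e₂, hα₁₂, hβ₁₂, hγ₁₂]; module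
  have hv : P₃ - P₂ = α₂₃ • A + β₂₃ • B + γ₂₃ • C := by
    rw [e₂, e₃, hα₂₃, hβ₂₃, hγ₂₃]; module
  have hw : P₃ - P₁ = (-α₃₁) • A + (-β₃₁) • B + (-γ₃₁) • C := by
    rw [e₁, e₃, hα₃₁, hβ₃₁, hγ₃₁]; module
  have hs₁ : α₁₂ + β₁₂ + γ₁₂ = 0 := by
    rw [hα₁₂, hβ₁₂, hγ₁₂, hT₁def, hT₂def]; field_simp [show t₁₁ + t₁₂ + t₁₃ ≠ 0 from hT₁, show t₂₁ + t₂₂ + t₂₃ ≠ 0 from hT₂]; ring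
  have hs₂ : α₂₃ + β₂₃ + γ₂₃ = 0 := by
    rw [hα₂₃, hβ₂₃, hγ₂₃, hT₂def, hT₃def]; field_simp [show t₂₁ + t₂₂ + t₂₃ ≠ 0 from hT₂, show t₃₁ + t₃₂ + t₃₃ ≠ 0 from hT₃]; ring
  have hs₃ : (-α₃₁) + (-β₃₁) + (-γ₃₁) = 0 := by
    rw [hα₃₁, hβ₃₁, hγ₃₁, hT₁def, hT₃def]; field_simp [show t₁₁ + t₁₂ + t₁₃ ≠ 0 from hT₁, show t₃₁ + t₃₂ + t₃₃ ≠ 0 from hT₃]; ring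
  have qu : ‖P₂ - P₁‖ ^ 2 =
      -(β₁₂ * γ₁₂ * ‖B - C‖ ^ 2) - γ₁₂ * α₁₂ * ‖C - A‖ ^ 2 - α₁₂ * β₁₂ * ‖A - B‖ ^ 2 := by
    rw [hu]; exact key19 A B C _ _ _ hs₁
  have qv : ‖P₃ - P₂‖ ^ 2 =
      -(β₂₃ * γ₂₃ * ‖B - C‖ ^ 2) - γ₂₃ * α₂₃ * ‖C - A‖ ^ 2 - α₂₃ * β₂₃ * ‖A - B‖ ^ 2 := by
    rw [hv]; exact key19 A B C _ _ _ hs₂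
  have qw : ‖P₃ - P₁‖ ^ 2 =
      -(β₃₁ * γ₃₁ * ‖B - C‖ ^ 2) - γ₃₁ * α₃₁ * ‖C - A‖ ^ 2 - α₃₁ * β₃₁ * ‖A - B‖ ^ 2 := by
    rw [hw]
    have := key19 A B C _ _ _ hs₃
    rw [this]; ring
  have inner2 : 2 * ⟪P₂ - P₁, P₃ - P₂⟫ = ‖P₃ - P₁‖ ^ 2 - ‖P₂ - P₁‖ ^ 2 - ‖P₃ - P₂‖ ^ 2 := by
    have h3 : P₃ - P₁ = (P₂ - P₁) + (P₃ - P₂) := by abel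
    rw [h3, norm_add_sq_real]; ring
  rw [dist_eq_norm B C, dist_eq_norm C A, dist_eq_norm A B]
  have hLHS : ‖B - C‖ ^ 2 * (β₁₂ * γ₁₂ + β₂₃ * γ₂₃ - β₃₁ * γ₃₁)
        + ‖C - A‖ ^ 2 * (γ₁₂ * α₁₂ + γ₂₃ * α₂₃ - γ₃₁ * α₃₁)
        + ‖A - B‖ ^ 2 * (α₁₂ * β₁₂ + α₂₃ * β₂₃ - α₃₁ * β₃₁)
      = 2 * ⟪P₂ - P₁, P₃ - P₂⟫ := by
    rw [inner2, qu, qv, qw]; ring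
  rw [hLHS, ← qu, ← qv, Real.sqrt_sq (norm_nonneg _), Real.sqrt_sq (norm_nonneg _),
    abs_mul, abs_two, mul_assoc]
  have := abs_real_inner_le_norm (P₂ - P₁) (P₃ - P₂)
  linarith
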